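/- Let 𝔽 be ℝ or ℂ, let 𝒰 be a nonprincipal ultrafilter on ℕ, and let X be an infinite-dimensional normed space over 𝔽 with a sequence (e_n*) in X* satisfying ‖Σ_{n≤m} r_n e_n*‖ = Σ_{n≤m}|r_n| for every m and all scalars r_n, and with the extension property: for every m and every x* ∈ X* not in span{e_1*,…,e_m*}, there exists f* ∈ X* such that span{e_1*,…,e_m*, x*} = span{e_1*,…,e_m*, f*} and ‖r f* + Σ_{k≤m} r_k e_k*‖ = |r| + Σ_{k≤m}|r_k| for all scalars r, r_1,…,r_m. Then there exists x* ∈ (X^𝒰)* with ‖x*‖ = 1 whose distance to the image of the canonical isometry j : (X*)^𝒰 → (X^𝒰)* equals 1. -/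

import Mathlib

/-!
Ultrapowers of normed spaces along a nonprincipal ultrafilter `𝒰` on `ℕ`.

`BoundedSeq X = ℓ∞(X)` is the normed space of bounded sequences in `X` with the sup norm,
`nullSeq 𝕜 𝒰 X = c_𝒰(X)` is the subspace of sequences whose norms tend to `0` along `𝒰`,
and `Ultrapower 𝕜 𝒰 X = ℓ∞(X)/c_𝒰(X)` is the ultrapower, with quotient map `up 𝕜 𝒰`.

The canonical linear isometry `j : (X*)^𝒰 → (X^𝒰)*` sends the class of a (bounded)
sequence of functionals `(f_n)` to the functional `(x_n)^𝒰 ↦ lim_{n→𝒰} f_n(x_n)`; hence a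
functional `φ` on `X^𝒰` lies in the image of `j` if and only if there is a bounded
sequence `(f_n)` in `X*` with `φ((x_n)^𝒰) = lim_{n→𝒰} f_n(x_n)` for every bounded
sequence `(x_n)`.  This is the predicate `InCanonicalImage` below.
-/

open Filter Topology
open scoped ENNReal

set_option maxHeartbeats 1600000
noncomputable section

/-- The normed space `ℓ∞(X)` of bounded sequences in `X`, with the sup norm. -/
abbrev BoundedSeq (X : Type*) [NormedAddCommGroup X] := lp (fun _ : ℕ => X) ∞

variable (𝕜 : Type*) [NontriviallyNormedField 𝕜]

/-- `c_𝒰(X)`: the subspace of bounded sequences tending to zero in norm along `𝒰`. -/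
def nullSeq (𝒰 : Ultrafilter ℕ) (X : Type*) [NormedAddCommGroup X] [NormedSpace 𝕜 X] :
    Submodule 𝕜 (BoundedSeq X) where
  carrier := {f | Tendsto (fun n => ‖f n‖) 𝒰 (𝓝 0)}
  zero_mem' := by simp [tendsto_const_nhds]
  add_mem' := by
    intro f g hf hg
    have h := hf.add hg
    rw [add_zero] at h
    exact squeeze_zero (fun n => norm_nonneg _) (fun n => norm_add_le _ _) h
  smul_mem' := by
    intro c f hf
    have h := hf.const_mul ‖c‖
    rw [mul_zero] at h
    exact squeeze_zero (fun n => norm_nonneg _) (fun n => by simp [norm_smul]) h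

/-- The ultrapower `X^𝒰 = ℓ∞(X)/c_𝒰(X)`. -/
abbrev Ultrapower (𝒰 : Ultrafilter ℕ) (X : Type*) [NormedAddCommGroup X] [NormedSpace 𝕜 X] :=
  BoundedSeq X ⧸ nullSeq 𝕜 𝒰 X

/-- The quotient map `ℓ∞(X) → X^𝒰`, `(x_n) ↦ (x_n)^𝒰`. -/
def up (𝒰 : Ultrafilter ℕ) {X : Type*} [NormedAddCommGroup X] [NormedSpace 𝕜 X]
    (f : BoundedSeq X) : Ultrapower 𝕜 𝒰 X := Submodule.Quotient.mk f

/-- `φ : (X^𝒰)*` lies in the image of the canonical linear isometry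
`j : (X*)^𝒰 → (X^𝒰)*` iff it is induced by a bounded sequence of functionals on `X`. -/
def InCanonicalImage (𝒰 : Ultrafilter ℕ) {X : Type*} [NormedAddCommGroup X] [NormedSpace 𝕜 X]
    (φ : StrongDual 𝕜 (Ultrapower 𝕜 𝒰 X)) : Prop :=
  ∃ f : ℕ → StrongDual 𝕜 X, (∃ C : ℝ, ∀ n, ‖f n‖ ≤ C) ∧
    ∀ x : BoundedSeq X, Tendsto (fun n => f n (x n)) 𝒰 (𝓝 (φ (up 𝕜 𝒰 x)))

section Helpers

section
variable {𝕜 X : Type*} [RCLike 𝕜] [NormedAddCommGroup X] [NormedSpace 𝕜 X]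

set_option maxHeartbeats 1000000 in
lemma lemA {m : ℕ} (g : Fin m → StrongDual 𝕜 X)
    (hg : ∀ r : Fin m → 𝕜, ‖∑ i, r i • g i‖ = ∑ i, ‖r i‖)
    (τ : Fin m → 𝕜) (hτ : ∀ i, ‖τ i‖ = 1) {δ : ℝ} (hδ : 0 < δ) :
    ∃ x : X, ‖x‖ ≤ 1 ∧ ∀ i, ‖g i x - τ i‖ ≤ δ := by
  rcases Nat.eq_zero_or_pos m with hm | hm
  · exact ⟨0, by simp, fun i => absurd i.2 (by omega)⟩
  have hm1 : (1:ℝ) ≤ m := by exact_mod_cast hm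
  set δ' : ℝ := min (δ ^ 2 / 2) (1 / 2) with hδ'def
  have hδ'pos : 0 < δ' := lt_min (by positivity) (by norm_num)
  have hδ'le : δ' ≤ δ ^ 2 / 2 := min_le_left _ _
  have hδ'half : δ' ≤ 1 / 2 := min_le_right _ _
  have hg1 : ∀ i, ‖g i‖ = 1 := by
    intro i
    have := hg (fun j => if j = i then 1 else 0)
    have hz : ∀ x : StrongDual 𝕜 X, (0:𝕜) • x = 0 := fun x => zero_smul 𝕜 x
    simpa [Finset.sum_ite_eq', apply_ite (norm : 𝕜 → ℝ), hz] using this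
  set G : StrongDual 𝕜 X := ∑ i, (starRingEnd 𝕜) (τ i) • g i with hGdef
  have hGnorm : ‖G‖ = m := by
    rw [hGdef, hg]
    simp [hτ]
  have hlt : (m : ℝ) - δ' < ‖G‖ := by rw [hGnorm]; linarith
  obtain ⟨x₀, hx₀, hGx₀⟩ := G.exists_lt_apply_of_lt_opNorm hlt
  set w : 𝕜 := G x₀ with hwdef
  have hwpos : 0 < ‖w‖ := by linarith
  -- rotate
  set c : 𝕜 := (starRingEnd 𝕜) w / (‖w‖ : 𝕜) with hcdef
  have hwne : w ≠ 0 := by simpa using hwpos.ne'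
  have hc1 : ‖c‖ = 1 := by
    rw [hcdef, norm_div]
    simp [RCLike.norm_conj, RCLike.norm_ofReal, abs_of_pos hwpos, div_self hwpos.ne']
  set y : X := c • x₀ with hydef
  have hy1 : ‖y‖ ≤ 1 := by
    rw [hydef, norm_smul, hc1, one_mul]; exact hx₀.le
  have hGy : G y = (‖w‖ : 𝕜) := by
    rw [hydef, map_smul, smul_eq_mul, ← hwdef, hcdef, div_mul_eq_mul_div,
      RCLike.conj_mul]
    push_cast
    rw [pow_two, mul_div_assoc, div_self, mul_one]
    exact_mod_cast hwpos.ne'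
  refine ⟨y, hy1, fun i => ?_⟩
  have hgy_le : ∀ j, ‖g j y‖ ≤ 1 := fun j => by
    calc ‖g j y‖ ≤ ‖g j‖ * ‖y‖ := (g j).le_opNorm y
    _ ≤ 1 := by rw [hg1]; simpa using hy1
  set t : Fin m → ℝ := fun j => RCLike.re ((starRingEnd 𝕜) (τ j) * g j y) with htdef
  have ht_le : ∀ j, t j ≤ 1 := fun j => by
    calc t j ≤ ‖(starRingEnd 𝕜) (τ j) * g j y‖ := RCLike.re_le_norm _
    _ = ‖τ j‖ * ‖g j y‖ := by rw [norm_mul, RCLike.norm_conj]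
    _ ≤ 1 := by rw [hτ j, one_mul]; exact hgy_le j
  have htsum : ∑ j, t j = ‖w‖ := by
    have : G y = ∑ j, (starRingEnd 𝕜) (τ j) * g j y := by
      rw [hGdef]; simp [ContinuousLinearMap.sum_apply]
    rw [htdef, ← map_sum, ← this, hGy, RCLike.ofReal_re]
  have hti : 1 - δ' ≤ t i := by
    have hsplit : ∑ j, t j = t i + ∑ j ∈ Finset.univ.erase i, t j :=
      (Finset.add_sum_erase _ _ (Finset.mem_univ i)).symm
    have herase : ∑ j ∈ Finset.univ.erase i, t j ≤ (m - 1 : ℝ) := by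
      calc ∑ j ∈ Finset.univ.erase i, t j ≤ ∑ _j ∈ Finset.univ.erase i, (1:ℝ) :=
        Finset.sum_le_sum fun j _ => ht_le j
      _ = (m - 1 : ℝ) := by
        rw [Finset.sum_const, Finset.card_erase_of_mem (Finset.mem_univ i)]
        simp [Nat.cast_sub hm]
    have : (m : ℝ) - δ' ≤ ∑ j, t j := by rw [htsum]; linarith
    linarith [hsplit ▸ this]
  have hsq : ‖g i y - τ i‖ ^ 2 ≤ δ ^ 2 := by
    have hinner : ‖g i y - τ i‖ ^ 2 = ‖g i y‖ ^ 2 - 2 * t i + ‖τ i‖ ^ 2 := by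
      have := @norm_sub_sq 𝕜 𝕜 _ _ _ (g i y) (τ i)
      have hre : RCLike.re (τ i * (starRingEnd 𝕜) ((g i) y)) = t i := by
        simp only [htdef]
        rw [← RCLike.conj_re (τ i * (starRingEnd 𝕜) ((g i) y)), map_mul,
          RCLike.conj_conj]
      rw [this, RCLike.inner_apply, hre]
    have h1 : ‖g i y‖ ^ 2 ≤ 1 := by
      have := hgy_le i
      nlinarith [norm_nonneg (g i y)]
    rw [hinner, hτ i]
    nlinarith [hti, hδ'le]
  have := (pow_le_pow_iff_left₀ (norm_nonneg _) hδ.le (two_ne_zero)).1 hsq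
  exact this

lemma lemB {m : ℕ} (g : Fin m → StrongDual 𝕜 X)
    (hg : ∀ r : Fin m → 𝕜, ‖∑ i, r i • g i‖ = ∑ i, ‖r i‖)
    (τ : Fin m → 𝕜) (hτ : ∀ i, τ i = 0 ∨ τ i = 1) {δ : ℝ} (hδ : 0 < δ) :
    ∃ x : X, ‖x‖ ≤ 1 ∧ ∀ i, ‖g i x - τ i‖ ≤ δ := by
  obtain ⟨xp, hxp1, hxp2⟩ := lemA g hg (fun _ => 1) (fun _ => norm_one) hδ
  obtain ⟨xm, hxm1, hxm2⟩ := lemA g hg (fun i => 2 * τ i - 1)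
    (fun i => by rcases hτ i with h | h <;> simp [h] <;> norm_num) hδ
  refine ⟨(2:𝕜)⁻¹ • (xp + xm), ?_, fun i => ?_⟩
  · rw [norm_smul, norm_inv]
    have : ‖(2:𝕜)‖ = 2 := by simp
    rw [this]
    have := norm_add_le xp xm
    linarith [norm_nonneg (xp + xm)]
  · have hval : g i ((2:𝕜)⁻¹ • (xp + xm)) - τ i
        = (2:𝕜)⁻¹ • ((g i xp - 1) + (g i xm - (2 * τ i - 1))) := by
      rw [map_smul, map_add]
      rw [smul_eq_mul, smul_eq_mul]
      ring
    rw [hval, norm_smul, norm_inv]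
    have h2 : ‖(2:𝕜)‖ = 2 := by simp
    rw [h2]
    have := norm_add_le (g i xp - 1) (g i xm - (2 * τ i - 1))
    have := hxp2 i
    have := hxm2 i
    rw [inv_mul_le_iff₀ (by norm_num : (0:ℝ) < 2)]
    linarith

end

section ULim
variable {𝕜 : Type*} [RCLike 𝕜] (𝒰 : Ultrafilter ℕ)

lemma ulim_exists (g : ℕ → 𝕜) {C : ℝ} (hg : ∀ n, ‖g n‖ ≤ C) :
    ∃ x, Filter.Tendsto g 𝒰 (𝓝 x) := by
  have hc : IsCompact (Metric.closedBall (0:𝕜) C) := isCompact_closedBall _ _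
  have hle : (𝒰.map g : Filter 𝕜) ≤ Filter.principal (Metric.closedBall 0 C) := by
    rw [Filter.le_principal_iff]
    exact Filter.mem_map.2 (Filter.univ_mem' (fun n => by
      simpa [Metric.mem_closedBall, dist_eq_norm] using hg n))
  obtain ⟨x, -, hx⟩ := hc.ultrafilter_le_nhds (𝒰.map g) hle
  exact ⟨x, hx⟩

lemma ulim_tendsto (g : ℕ → 𝕜) {C : ℝ} (hg : ∀ n, ‖g n‖ ≤ C) :
    Filter.Tendsto g 𝒰 (𝓝 (limUnder 𝒰 g)) :=
  tendsto_nhds_limUnder (ulim_exists 𝒰 g hg)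

end ULim
end Helpers

/-- Let `𝕜` be `ℝ` or `ℂ` and let `X` be an infinite-dimensional normed
space over `𝕜` whose dual contains an isometric copy of `ℓ¹` with the extension property:
any `x*` outside the span of `e_1*, …, e_m*` may be replaced by a vector `f*` generating
the same extended span with `‖r f* + Σ r_k e_k*‖ = |r| + Σ |r_k|`.  Then there is a
norm-one functional on `X^𝒰` at distance exactly `1` from the image of the canonical
isometry `j : (X*)^𝒰 → (X^𝒰)*`. -/
theorem exists_functional_distance_one_from_canonical_image
    (𝒰 : Ultrafilter ℕ) (h𝒰 : (𝒰 : Filter ℕ) ≤ Filter.cofinite)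
    {𝕜 : Type*} [RCLike 𝕜] (X : Type*) [NormedAddCommGroup X] [NormedSpace 𝕜 X]
    (hdim : ¬ FiniteDimensional 𝕜 X)
    (e : ℕ → StrongDual 𝕜 X)
    (he : ∀ (m : ℕ) (r : ℕ → 𝕜),
      ‖∑ n ∈ Finset.range m, r n • e n‖ = ∑ n ∈ Finset.range m, ‖r n‖)
    (hext : ∀ (m : ℕ) (g : StrongDual 𝕜 X),
      g ∉ Submodule.span 𝕜 (Set.range fun k : Fin m => e k) →
      ∃ f : StrongDual 𝕜 X,
        Submodule.span 𝕜 (insert g (Set.range fun k : Fin m => e k)) =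
          Submodule.span 𝕜 (insert f (Set.range fun k : Fin m => e k)) ∧
        ∀ (r : 𝕜) (rs : Fin m → 𝕜),
          ‖r • f + ∑ k : Fin m, rs k • e k‖ = ‖r‖ + ∑ k : Fin m, ‖rs k‖) :
    ∃ φ : StrongDual 𝕜 (Ultrapower 𝕜 𝒰 X), ‖φ‖ = 1 ∧
      Metric.infDist φ {ψ : StrongDual 𝕜 (Ultrapower 𝕜 𝒰 X) |
        InCanonicalImage 𝕜 𝒰 ψ} = 1 := by
  classical
  have he1 : ∀ k, ‖e k‖ = 1 := by
    intro k
    have := he (k + 1) (fun n => if n = k then 1 else 0)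
    have hz : ∀ x : StrongDual 𝕜 X, (0:𝕜) • x = 0 := fun x => zero_smul 𝕜 x
    simpa [Finset.sum_ite_eq', apply_ite (norm : 𝕜 → ℝ), hz] using this
  have hcoord : ∀ (x : BoundedSeq X) (k n : ℕ), ‖e k (x n)‖ ≤ ‖x‖ := by
    intro x k n
    calc ‖e k (x n)‖ ≤ ‖e k‖ * ‖x n‖ := (e k).le_opNorm _
    _ ≤ 1 * ‖x‖ := mul_le_mul (he1 k).le
        (lp.norm_apply_le_norm ENNReal.top_ne_zero x n) (norm_nonneg _) zero_le_one
    _ = ‖x‖ := one_mul _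
  set inn : BoundedSeq X → ℕ → 𝕜 := fun x k => limUnder 𝒰 (fun n => e k (x n)) with hinn
  have hinn_t : ∀ (x : BoundedSeq X) (k : ℕ), Tendsto (fun n => e k (x n)) 𝒰 (𝓝 (inn x k)) :=
    fun x k => ulim_tendsto 𝒰 _ (fun n => hcoord x k n)
  have hinn_b : ∀ (x : BoundedSeq X) (k : ℕ), ‖inn x k‖ ≤ ‖x‖ := fun x k =>
    le_of_tendsto' (hinn_t x k).norm (fun n => hcoord x k n)
  set Phi0 : BoundedSeq X → 𝕜 := fun x => limUnder 𝒰 (inn x) with hPhi0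
  have hPhi0_t : ∀ x : BoundedSeq X, Tendsto (inn x) 𝒰 (𝓝 (Phi0 x)) := fun x =>
    ulim_tendsto 𝒰 _ (hinn_b x)
  have hPhi0_b : ∀ x : BoundedSeq X, ‖Phi0 x‖ ≤ ‖x‖ := fun x =>
    le_of_tendsto' (hPhi0_t x).norm (hinn_b x)
  have hadd : ∀ x y : BoundedSeq X, Phi0 (x + y) = Phi0 x + Phi0 y := by
    intro x y
    have h1 : ∀ k, inn (x + y) k = inn x k + inn y k := by
      intro k
      refine Tendsto.limUnder_eq (((hinn_t x k).add (hinn_t y k)).congr fun n => ?_)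
      have : (x + y) n = x n + y n := by rw [lp.coeFn_add]; rfl
      rw [this, map_add]
    refine Tendsto.limUnder_eq (((hPhi0_t x).add (hPhi0_t y)).congr fun k => (h1 k).symm)
  have hsmul : ∀ (c : 𝕜) (x : BoundedSeq X), Phi0 (c • x) = c * Phi0 x := by
    intro c x
    have h1 : ∀ k, inn (c • x) k = c * inn x k := by
      intro k
      refine Tendsto.limUnder_eq ((((hinn_t x k).const_mul c)).congr fun n => ?_)
      have : (c • x) n = c • x n := by rw [lp.coeFn_smul]; rfl
      rw [this, map_smul, smul_eq_mul]
    refine Tendsto.limUnder_eq ((((hPhi0_t x).const_mul c)).congr fun k => (h1 k).symm)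
  set Philin : BoundedSeq X →ₗ[𝕜] 𝕜 :=
    { toFun := Phi0, map_add' := hadd, map_smul' := fun c x => by simpa using hsmul c x }
    with hPhilin
  have hker : nullSeq 𝕜 𝒰 X ≤ LinearMap.ker Philin := by
    intro x hx
    have hx' : Tendsto (fun n => ‖x n‖) 𝒰 (𝓝 0) := hx
    have h1 : ∀ k, inn x k = 0 := by
      intro k
      refine Tendsto.limUnder_eq (squeeze_zero_norm (fun n => ?_) hx')
      calc ‖e k (x n)‖ ≤ ‖e k‖ * ‖x n‖ := (e k).le_opNorm _
      _ ≤ 1 * ‖x n‖ := by gcongr; exact (he1 k).le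
      _ = ‖x n‖ := one_mul _
    have : Phi0 x = 0 := by
      refine Tendsto.limUnder_eq ?_
      have : inn x = fun _ => 0 := funext h1
      rw [this]
      exact tendsto_const_nhds
    simpa [LinearMap.mem_ker, hPhilin] using this
  set philin : Ultrapower 𝕜 𝒰 X →ₗ[𝕜] 𝕜 := (nullSeq 𝕜 𝒰 X).liftQ Philin hker with hphilin
  have hphival : ∀ x : BoundedSeq X, philin (up 𝕜 𝒰 x) = Phi0 x := fun x => rfl
  have hphibound : ∀ z, ‖philin z‖ ≤ 1 * ‖z‖ := by
    intro z
    rw [one_mul]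
    refine le_of_forall_pos_le_add fun ε hε => ?_
    obtain ⟨x, hx1, hx2⟩ := Submodule.Quotient.norm_mk_lt z hε
    have hz : philin z = Phi0 x := by rw [← hx1]; rfl
    rw [hz]
    exact (hPhi0_b x).trans hx2.le
  set φ : StrongDual 𝕜 (Ultrapower 𝕜 𝒰 X) :=
    LinearMap.mkContinuous philin 1 hphibound with hφdef
  have hφval : ∀ x : BoundedSeq X, φ (up 𝕜 𝒰 x) = Phi0 x := fun x => rfl
  have hφnorm : ‖φ‖ ≤ 1 := LinearMap.mkContinuous_norm_le _ zero_le_one _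
  have h0mem : InCanonicalImage 𝕜 𝒰 (0 : StrongDual 𝕜 (Ultrapower 𝕜 𝒰 X)) := by
    refine ⟨fun _ => 0, ⟨0, fun n => by simp⟩, fun x => ?_⟩
    simpa using (tendsto_const_nhds : Tendsto (fun _ : ℕ => (0:𝕜)) 𝒰 (𝓝 0))
  have h0mem' : (0 : StrongDual 𝕜 (Ultrapower 𝕜 𝒰 X)) ∈
      {ψ : StrongDual 𝕜 (Ultrapower 𝕜 𝒰 X) | InCanonicalImage 𝕜 𝒰 ψ} :=
    Set.mem_setOf_eq ▸ h0mem
  have key : ∀ ψ : StrongDual 𝕜 (Ultrapower 𝕜 𝒰 X),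
      InCanonicalImage 𝕜 𝒰 ψ → (1:ℝ) ≤ ‖φ - ψ‖ := by
    rintro ψ ⟨f, ⟨C, hC⟩, hf⟩
    have hC0 : 0 ≤ C := le_trans (norm_nonneg (f 0)) (hC 0)
    have h𝒰' : (𝒰 : Filter ℕ) ≤ atTop := Nat.cofinite_eq_atTop ▸ h𝒰
    have hδt : Tendsto (fun n : ℕ => 1 / ((n:ℝ) + 1)) 𝒰 (𝓝 0) :=
      tendsto_one_div_add_atTop_nhds_zero_nat.mono_left h𝒰'
    -- decompose each f n
    have hdec : ∀ n : ℕ, ∃ (a : 𝕜) (g : StrongDual 𝕜 X) (b : Fin n → 𝕜),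
        f n = a • g + ∑ k : Fin n, b k • e k ∧
        ∀ (r : 𝕜) (rs : Fin n → 𝕜),
          ‖r • g + ∑ k : Fin n, rs k • e k‖ = ‖r‖ + ∑ k : Fin n, ‖rs k‖ := by
      intro n
      by_cases hsp : f n ∈ Submodule.span 𝕜 (Set.range fun k : Fin n => e k)
      · obtain ⟨c, hc⟩ := Submodule.mem_span_range_iff_exists_fun 𝕜 |>.1 hsp
        refine ⟨0, e n, c, by rw [zero_smul 𝕜 (e n), zero_add, hc], fun r rs => ?_⟩
        set r' : ℕ → 𝕜 := fun j => if h : j < n then rs ⟨j, h⟩ else if j = n then r else 0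
          with hr'
        have h1 : ∀ k : Fin n, r' (k : ℕ) = rs k := fun k => by simp [hr', k.2]
        have h2 : r' n = r := by simp [hr']
        have h3 := he (n + 1) r'
        rw [Finset.sum_range_succ, Finset.sum_range_succ, h2,
          ← Fin.sum_univ_eq_sum_range (fun j => r' j • e j) n,
          ← Fin.sum_univ_eq_sum_range (fun j => ‖r' j‖) n] at h3
        simp only [h1] at h3
        rw [add_comm (r • e n), h3, add_comm]
      · obtain ⟨g, hspan, hnorm⟩ := hext n (f n) hsp
        have hmem : f n ∈ Submodule.span 𝕜 (insert g (Set.range fun k : Fin n => e ↑k)) := by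
          rw [← hspan]
          exact Submodule.subset_span (Set.mem_insert _ _)
        obtain ⟨a, z, hz, hzz⟩ := Submodule.mem_span_insert.1 hmem
        obtain ⟨c, hc⟩ := Submodule.mem_span_range_iff_exists_fun 𝕜 |>.1 hz
        exact ⟨a, g, c, by rw [hzz, hc], hnorm⟩
    choose a g b hfdec hfnorm using hdec
    set bnk : ℕ → ℕ → 𝕜 := fun n k => if h : k < n then b n ⟨k, h⟩ else 0 with hbnk
    have habs : ∀ n, ‖a n‖ + ∑ k : Fin n, ‖b n k‖ ≤ C := by
      intro n
      have h1 := hfnorm n (a n) (b n)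
      rw [← hfdec n] at h1
      rw [← h1]
      exact hC n
    have hanorm : ∀ n, ‖a n‖ ≤ C := fun n =>
      le_trans (le_add_of_nonneg_right (Finset.sum_nonneg fun _ _ => norm_nonneg _)) (habs n)
    have hbsum : ∀ n, ∑ k : Fin n, ‖b n k‖ ≤ C := fun n =>
      le_trans (le_add_of_nonneg_left (norm_nonneg _)) (habs n)
    have hsum_b : ∀ n K, ∑ k ∈ Finset.range K, ‖bnk n k‖ ≤ C := by
      intro n K
      have h1 : ∑ k ∈ Finset.range K, ‖bnk n k‖
          = ∑ k ∈ (Finset.range K).filter (· < n), ‖bnk n k‖ := by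
        symm
        apply Finset.sum_filter_of_ne
        intro j _ hne
        by_contra h
        exact hne (by simp [hbnk, h])
      have h2 : (Finset.range K).filter (· < n) ⊆ Finset.range n := fun j hj => by
        simp only [Finset.mem_filter, Finset.mem_range] at hj ⊢
        exact hj.2
      calc ∑ k ∈ Finset.range K, ‖bnk n k‖
          = ∑ k ∈ (Finset.range K).filter (· < n), ‖bnk n k‖ := h1
      _ ≤ ∑ k ∈ Finset.range n, ‖bnk n k‖ :=
        Finset.sum_le_sum_of_subset_of_nonneg h2 (fun _ _ _ => norm_nonneg _)
      _ = ∑ k : Fin n, ‖b n k‖ := by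
        rw [← Fin.sum_univ_eq_sum_range (fun k => ‖bnk n k‖) n]
        exact Finset.sum_congr rfl fun k _ => by simp [hbnk, k.2]
      _ ≤ C := hbsum n
    have hbnk_bd : ∀ n k, ‖bnk n k‖ ≤ C := by
      intro n k
      refine le_trans ?_ (hsum_b n (k + 1))
      exact Finset.single_le_sum (fun i _ => norm_nonneg (bnk n i))
        (Finset.self_mem_range_succ k)
    set β : ℕ → 𝕜 := fun k => limUnder 𝒰 (fun n => bnk n k) with hβ
    have hβ_t : ∀ k, Tendsto (fun n => bnk n k) 𝒰 (𝓝 (β k)) := fun k =>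
      ulim_tendsto 𝒰 _ (fun n => hbnk_bd n k)
    have hβsum : ∀ K, ∑ k ∈ Finset.range K, ‖β k‖ ≤ C := by
      intro K
      have ht : Tendsto (fun n => ∑ k ∈ Finset.range K, ‖bnk n k‖) 𝒰
          (𝓝 (∑ k ∈ Finset.range K, ‖β k‖)) :=
        tendsto_finset_sum _ (fun k _ => (hβ_t k).norm)
      exact le_of_tendsto ht (Filter.Eventually.of_forall fun n => hsum_b n K)
    have hβsummable : Summable (fun k => ‖β k‖) :=
      summable_of_sum_range_le (fun k => norm_nonneg _) hβsum
    -- the ε-argument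
    refine le_of_forall_pos_le_add fun ε hε => ?_
    obtain ⟨K, hK⟩ : ∃ K, (∑' k, ‖β k‖) - ε / 4 < ∑ k ∈ Finset.range K, ‖β k‖ := by
      have hS := hβsummable.hasSum.tendsto_sum_nat
      exact (hS.eventually (eventually_gt_nhds (by linarith))).exists
    have htail : ∀ m, ∑ k ∈ Finset.Ico K m, ‖β k‖ ≤ ε / 4 := by
      intro m
      rcases le_or_gt K m with h | h
      · have h1 : ∑ k ∈ Finset.range K, ‖β k‖ + ∑ k ∈ Finset.Ico K m, ‖β k‖
            = ∑ k ∈ Finset.range m, ‖β k‖ := Finset.sum_range_add_sum_Ico _ h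
        have h2 : ∑ k ∈ Finset.range m, ‖β k‖ ≤ ∑' k, ‖β k‖ :=
          Summable.sum_le_tsum _ (fun k _ => norm_nonneg _) hβsummable
        linarith
      · rw [Finset.Ico_eq_empty (by omega), Finset.sum_empty]
        linarith
    set V : ℕ → Set ℕ := fun m =>
      {n | ∀ m' ≤ m, ∑ k ∈ Finset.Ico K m', ‖bnk n k‖ < ε / 2} with hV
    have hU : ∀ m', ∀ᶠ n in (𝒰 : Filter ℕ),
        ∑ k ∈ Finset.Ico K m', ‖bnk n k‖ < ε / 2 := by
      intro m'
      have ht : Tendsto (fun n => ∑ k ∈ Finset.Ico K m', ‖bnk n k‖) 𝒰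
          (𝓝 (∑ k ∈ Finset.Ico K m', ‖β k‖)) :=
        tendsto_finset_sum _ (fun k _ => (hβ_t k).norm)
      have hlt : ∑ k ∈ Finset.Ico K m', ‖β k‖ < ε / 2 :=
        lt_of_le_of_lt (htail m') (by linarith)
      exact ht.eventually (eventually_lt_nhds hlt)
    have hVmem : ∀ m, V m ∈ 𝒰 := by
      intro m
      have : ∀ᶠ n in (𝒰 : Filter ℕ), ∀ m' ∈ Finset.range (m + 1),
          ∑ k ∈ Finset.Ico K m', ‖bnk n k‖ < ε / 2 :=
        (eventually_all_finset _).2 fun m' _ => hU m'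
      refine Filter.mem_of_superset this fun n hn => ?_
      intro m' hm'
      exact hn m' (Finset.mem_range.2 (Nat.lt_succ_of_le hm'))
    have hV0 : ∀ n, n ∈ V 0 := by
      intro n m' hm'
      interval_cases m'
      rw [Finset.Ico_eq_empty (by omega), Finset.sum_empty]
      linarith
    obtain ⟨M, hMV, hMle, hMbig⟩ : ∃ M : ℕ → ℕ, (∀ n, n ∈ V (M n)) ∧ (∀ n, M n ≤ n) ∧
        (∀ L, ∀ᶠ n in (𝒰 : Filter ℕ), L ≤ M n) := by
      refine ⟨fun n => Nat.findGreatest (fun m => n ∈ V m) n, fun n => ?_, fun n => ?_, ?_⟩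
      · exact Nat.findGreatest_spec (P := fun m => n ∈ V m) (Nat.zero_le n) (hV0 n)
      · exact Nat.findGreatest_le n
      · intro L
        have h1 : ∀ᶠ n in (𝒰 : Filter ℕ), L ≤ n := h𝒰' (eventually_ge_atTop L)
        filter_upwards [h1, hVmem L] with n hn hnV
        exact Nat.le_findGreatest hn (show (fun m => n ∈ V m) L from hnV)
    have hhead : ∀ n, ∑ k ∈ Finset.Ico K (M n), ‖bnk n k‖ < ε / 2 := fun n =>
      hMV n (M n) le_rfl
    -- construct the test vectors
    have hxex : ∀ n : ℕ, ∃ y : X, ‖y‖ ≤ 1 ∧ ‖g n y‖ ≤ 1 / ((n:ℝ) + 1) ∧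
        ∀ k : Fin n, ‖e k y - (if K ≤ (k:ℕ) ∧ (k:ℕ) < M n then 1 else 0)‖
          ≤ 1 / ((n:ℝ) + 1) := by
      intro n
      set G : Fin (n + 1) → StrongDual 𝕜 X :=
        Fin.cons (g n) (fun k : Fin n => e k) with hG
      have hGnorm : ∀ r : Fin (n + 1) → 𝕜, ‖∑ i, r i • G i‖ = ∑ i, ‖r i‖ := by
        intro r
        rw [Fin.sum_univ_succ, Fin.sum_univ_succ]
        simp only [hG, Fin.cons_zero, Fin.cons_succ]
        exact hfnorm n (r 0) (fun k => r k.succ)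
      set τ : Fin (n + 1) → 𝕜 :=
        Fin.cons 0 (fun k : Fin n => if K ≤ (k:ℕ) ∧ (k:ℕ) < M n then 1 else 0) with hτ
      have hτ01 : ∀ i, τ i = 0 ∨ τ i = 1 := by
        intro i
        refine Fin.cases ?_ (fun k => ?_) i
        · left; simp [hτ]
        · simp only [hτ, Fin.cons_succ]
          split_ifs
          · right; rfl
          · left; rfl
      obtain ⟨y, hy1, hy2⟩ := lemB G hGnorm τ hτ01
        (δ := 1 / ((n:ℝ) + 1)) (by positivity)
      refine ⟨y, hy1, ?_, fun k => ?_⟩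
      · have h2 := hy2 0
        simpa [hG, hτ] using h2
      · have h2 := hy2 k.succ
        simpa [hG, hτ] using h2
    choose xv hxv1 hxv2 hxv3 using hxex
    obtain ⟨x, hxcoe, hxnorm⟩ : ∃ x : BoundedSeq X, (∀ n, x n = xv n) ∧ ‖x‖ ≤ 1 := by
      refine ⟨⟨xv, memℓp_infty ⟨(1:ℝ), by rintro r ⟨n, rfl⟩; exact hxv1 n⟩⟩,
        fun n => rfl, ?_⟩
      exact lp.norm_le_of_forall_le zero_le_one fun n => hxv1 n
    -- φ evaluates to 1
    have hφx : φ (up 𝕜 𝒰 x) = 1 := by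
      rw [hφval, hPhi0]
      have hinner1 : ∀ k, K ≤ k → inn x k = 1 := by
        intro k hk
        refine Tendsto.limUnder_eq ?_
        have hev : ∀ᶠ n in (𝒰 : Filter ℕ), ‖e k (x n) - 1‖ ≤ 1 / ((n:ℝ) + 1) := by
          filter_upwards [hMbig (k + 1), h𝒰' (eventually_gt_atTop k)] with n h1 h2
          have h3 := hxv3 n ⟨k, h2⟩
          simp only [Fin.val_mk] at h3
          rw [if_pos ⟨hk, by omega⟩] at h3
          rw [hxcoe n]
          exact h3
        have h0 : Tendsto (fun n => e k (x n) - 1) 𝒰 (𝓝 0) := squeeze_zero_norm' hev hδt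
        have h4 := h0.add (tendsto_const_nhds (x := (1:𝕜)) (f := (𝒰 : Filter ℕ)))
        simpa using h4
      refine Tendsto.limUnder_eq ?_
      refine Tendsto.congr' ?_ (tendsto_const_nhds (x := (1:𝕜)) (f := (𝒰 : Filter ℕ)))
      filter_upwards [h𝒰' (eventually_ge_atTop K)] with k hk
      exact (hinner1 k hk).symm
    -- ψ evaluates to something small
    have hψx : ‖ψ (up 𝕜 𝒰 x)‖ ≤ ε / 2 := by
      have ht := (hf x).norm
      have hptwise : ∀ n, ‖f n (x n)‖ ≤ ε / 2 + 2 * C * (1 / ((n:ℝ) + 1)) := by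
        intro n
        rw [hxcoe n]
        set χ : Fin n → 𝕜 := fun k =>
          if K ≤ (k:ℕ) ∧ (k:ℕ) < M n then 1 else 0 with hχ
        have hval : f n (xv n) = a n * g n (xv n)
            + (∑ k : Fin n, b n k * χ k
              + ∑ k : Fin n, b n k * (e k (xv n) - χ k)) := by
          conv_lhs => rw [hfdec n]
          rw [← Finset.sum_add_distrib]
          simp only [ContinuousLinearMap.add_apply, ContinuousLinearMap.coe_sum',
            Finset.sum_apply, ContinuousLinearMap.coe_smul', Pi.smul_apply, smul_eq_mul]
          congr 1
          exact Finset.sum_congr rfl fun k _ => by ring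
        have hheadn : ‖∑ k : Fin n, b n k * χ k‖ ≤ ε / 2 := by
          have hid : ∑ k : Fin n, b n k * χ k = ∑ j ∈ Finset.Ico K (M n), bnk n j := by
            have e1 : ∑ k : Fin n, b n k * χ k
                = ∑ j ∈ Finset.range n, bnk n j
                    * (if K ≤ j ∧ j < M n then 1 else 0) := by
              rw [← Fin.sum_univ_eq_sum_range
                (fun j => bnk n j * (if K ≤ j ∧ j < M n then 1 else 0)) n]
              exact Finset.sum_congr rfl fun k _ => by simp [hbnk, hχ, k.2]
            have e2 : ∑ j ∈ Finset.range n, bnk n j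
                  * (if K ≤ j ∧ j < M n then 1 else 0)
                = ∑ j ∈ (Finset.range n).filter (fun j => K ≤ j ∧ j < M n), bnk n j := by
              rw [Finset.sum_filter]
              exact Finset.sum_congr rfl fun j _ => by split_ifs <;> ring
            have e3 : (Finset.range n).filter (fun j => K ≤ j ∧ j < M n)
                = Finset.Ico K (M n) := by
              ext j
              simp only [Finset.mem_filter, Finset.mem_range, Finset.mem_Ico]
              have := hMle n
              omega
            rw [e1, e2, e3]
          rw [hid]
          calc ‖∑ j ∈ Finset.Ico K (M n), bnk n j‖
              ≤ ∑ j ∈ Finset.Ico K (M n), ‖bnk n j‖ := norm_sum_le _ _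
          _ ≤ ε / 2 := (hhead n).le
        have herrn : ‖∑ k : Fin n, b n k * (e k (xv n) - χ k)‖
            ≤ C * (1 / ((n:ℝ) + 1)) := by
          calc ‖∑ k : Fin n, b n k * (e k (xv n) - χ k)‖
              ≤ ∑ k : Fin n, ‖b n k * (e k (xv n) - χ k)‖ := norm_sum_le _ _
          _ ≤ ∑ k : Fin n, ‖b n k‖ * (1 / ((n:ℝ) + 1)) := by
            refine Finset.sum_le_sum fun k _ => ?_
            rw [norm_mul]
            exact mul_le_mul_of_nonneg_left (hxv3 n k) (norm_nonneg _)
          _ = (∑ k : Fin n, ‖b n k‖) * (1 / ((n:ℝ) + 1)) := by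
            rw [Finset.sum_mul]
          _ ≤ C * (1 / ((n:ℝ) + 1)) := by
            have : (0:ℝ) ≤ 1 / ((n:ℝ) + 1) := by positivity
            exact mul_le_mul_of_nonneg_right (hbsum n) this
        have han : ‖a n * g n (xv n)‖ ≤ C * (1 / ((n:ℝ) + 1)) := by
          rw [norm_mul]
          exact mul_le_mul (hanorm n) (hxv2 n) (norm_nonneg _) hC0
        rw [hval]
        have h4 := norm_add_le (a n * g n (xv n))
          (∑ k : Fin n, b n k * χ k + ∑ k : Fin n, b n k * (e k (xv n) - χ k))
        have h5 := norm_add_le (∑ k : Fin n, b n k * χ k)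
          (∑ k : Fin n, b n k * (e k (xv n) - χ k))
        linarith [han, hheadn, herrn]
      have hlim2 : Tendsto (fun n : ℕ => ε / 2 + 2 * C * (1 / ((n:ℝ) + 1))) 𝒰
          (𝓝 (ε / 2)) := by
        have h1 := (hδt.const_mul (2 * C)).const_add (ε / 2)
        simpa using h1
      exact le_of_tendsto_of_tendsto' ht hlim2 hptwise
    -- conclude
    have h1 : (1:ℝ) - ε / 2 ≤ ‖(φ - ψ) (up 𝕜 𝒰 x)‖ := by
      have heval : (φ - ψ) (up 𝕜 𝒰 x) = φ (up 𝕜 𝒰 x) - ψ (up 𝕜 𝒰 x) := rfl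
      rw [heval, hφx]
      have h2 : ‖(1:𝕜)‖ - ‖ψ (up 𝕜 𝒰 x)‖ ≤ ‖1 - ψ (up 𝕜 𝒰 x)‖ :=
        norm_sub_norm_le _ _
      rw [norm_one] at h2
      linarith
    have h2 : ‖(φ - ψ) (up 𝕜 𝒰 x)‖ ≤ ‖φ - ψ‖ := by
      calc ‖(φ - ψ) (up 𝕜 𝒰 x)‖ ≤ ‖φ - ψ‖ * ‖up 𝕜 𝒰 x‖ := (φ - ψ).le_opNorm _
      _ ≤ ‖φ - ψ‖ * 1 := by
        have h3 : ‖up 𝕜 𝒰 x‖ ≤ 1 := (Submodule.Quotient.norm_mk_le _ x).trans hxnorm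
        exact mul_le_mul_of_nonneg_left h3 (norm_nonneg (φ - ψ))
      _ = ‖φ - ψ‖ := mul_one _
    linarith

  refine ⟨φ, ?_, ?_⟩
  · refine le_antisymm hφnorm ?_
    have := key 0 h0mem
    simpa using this
  · refine le_antisymm ?_ ?_
    · calc Metric.infDist φ {ψ | InCanonicalImage 𝕜 𝒰 ψ} ≤ dist φ 0 :=
        Metric.infDist_le_dist_of_mem h0mem'
      _ = ‖φ‖ := (dist_eq_norm φ 0).trans (by rw [sub_zero])
      _ ≤ 1 := hφnorm
    · by_contra hlt
      push_neg at hlt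
      obtain ⟨ψ, hψmem, hψd⟩ := (Metric.infDist_lt_iff ⟨0, h0mem'⟩).1 hlt
      replace hψd := lt_of_eq_of_lt (dist_eq_norm φ ψ).symm hψd
      exact absurd (key ψ hψmem) (by linarith)
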